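/- For every even integer n >= 6, the minimum size of an identifying code of the cycle C_n on n vertices equals n/2. -/

import Mathlib

open SimpleGraph

/-- The closed neighborhood of a vertex. -/
def cnbr {V : Type*} (G : SimpleGraph V) (v : V) : Set V := insert v (G.neighborSet v)

/-- `C` is an identifying code of `G`: every vertex is dominated by `C` and the
closed-neighborhood traces on `C` are pairwise distinct. -/
def IsIdCode {V : Type*} (G : SimpleGraph V) (C : Set V) : Prop :=
  (∀ v, (cnbr G v ∩ C).Nonempty) ∧
  ∀ u v : V, cnbr G u ∩ C = cnbr G v ∩ C → u = v

/-- The minimum size of an identifying code of `G`. -/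
noncomputable def gammaID {V : Type*} (G : SimpleGraph V) : ℕ :=
  sInf {n | ∃ C : Set V, IsIdCode G C ∧ C.ncard = n}

namespace IdAux

variable {m : ℕ}

lemma valAddOne (v : Fin (m+6)) : (v + 1).val = if v.val = m+5 then 0 else v.val+1 := by
  rw [Fin.val_add_one]
  rcases eq_or_ne v (Fin.last (m+5)) with h | h
  · simp [h, Fin.last]
  · rw [if_neg h, if_neg]
    intro hv; apply h; exact Fin.ext (by simpa [Fin.last] using hv)

lemma valSubOne (v : Fin (m+6)) : (v - 1).val = if v.val = 0 then m+5 else v.val - 1 := by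
  rw [Fin.coe_sub_one]
  rcases eq_or_ne v 0 with h | h
  · simp [h]
  · rw [if_neg h, if_neg]
    intro hv; apply h; exact Fin.ext (by simpa using hv)

lemma twoNeZero : (2 : Fin (m+6)) ≠ 0 := by
  intro h
  open Fin.NatCast in have h2 : ((2:ℕ) : Fin (m+6)) = ((0:ℕ) : Fin (m+6)) := by exact_mod_cast h
  have := congrArg Fin.val h2
  rw [Fin.val_natCast, Fin.val_natCast, Nat.mod_eq_of_lt (by omega), Nat.zero_mod] at this
  omega

lemma fourNeZero : (4 : Fin (m+6)) ≠ 0 := by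
  intro h
  open Fin.NatCast in have h2 : ((4:ℕ) : Fin (m+6)) = ((0:ℕ) : Fin (m+6)) := by exact_mod_cast h
  have := congrArg Fin.val h2
  rw [Fin.val_natCast, Fin.val_natCast, Nat.mod_eq_of_lt (by omega), Nat.zero_mod] at this
  omega

lemma parityAdd (hm : m % 2 = 0) (v : Fin (m+6)) : (v+1).val % 2 ≠ v.val % 2 := by
  rw [valAddOne]
  have := v.isLt
  split_ifs <;> omega

lemma paritySub (hm : m % 2 = 0) (v : Fin (m+6)) : (v-1).val % 2 ≠ v.val % 2 := by
  rw [valSubOne]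
  have := v.isLt
  split_ifs <;> omega

lemma cnbr_eq (v : Fin (m+6)) :
    cnbr (cycleGraph (m+6)) v = {v - 1, v, v + 1} := by
  rw [cnbr, cycleGraph_neighborSet]
  ext x
  simp [Set.mem_insert_iff]
  tauto

/-- The set of even-valued vertices. -/
def evens (m : ℕ) : Set (Fin (m+6)) := {v | v.val % 2 = 0}

lemma evens_isIdCode (hm : m % 2 = 0) : IsIdCode (cycleGraph (m+6)) (evens m) := by
  constructor
  · intro v
    by_cases h : v.val % 2 = 0
    · exact ⟨v, by rw [cnbr_eq]; right; left; rfl, h⟩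
    · refine ⟨v - 1, by rw [cnbr_eq]; left; rfl, ?_⟩
      have := paritySub hm v
      show (v-1).val % 2 = 0
      omega
  · intro u v h
    have huv : ∀ x, x ∈ ({u-1, u, u+1} : Set (Fin (m+6))) → x.val % 2 = 0 →
        x ∈ ({v-1, v, v+1} : Set (Fin (m+6))) := by
      intro x hx hx2
      have : x ∈ cnbr (cycleGraph (m+6)) u ∩ evens m := by
        rw [cnbr_eq]; exact ⟨hx, hx2⟩
      rw [h, cnbr_eq] at this
      exact this.1
    have hvu : ∀ x, x ∈ ({v-1, v, v+1} : Set (Fin (m+6))) → x.val % 2 = 0 →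
        x ∈ ({u-1, u, u+1} : Set (Fin (m+6))) := by
      intro x hx hx2
      have : x ∈ cnbr (cycleGraph (m+6)) v ∩ evens m := by
        rw [cnbr_eq]; exact ⟨hx, hx2⟩
      rw [← h, cnbr_eq] at this
      exact this.1
    by_cases hu : u.val % 2 = 0 <;> by_cases hv : v.val % 2 = 0
    · -- both even
      have := huv u (by right; left; rfl) hu
      rcases this with h1 | h1 | h1
      · have := paritySub hm v; rw [← h1] at this; omega
      · exact h1
      · have := parityAdd hm v; rw [← h1] at this; omega
    · -- u even, v odd
      have h1 := hvu (v-1) (by left; rfl) (by have := paritySub hm v; omega)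
      have h2 := hvu (v+1) (by right; right; rfl) (by have := parityAdd hm v; omega)
      have e1 : v - 1 = u := by
        rcases h1 with h1 | h1 | h1
        · have := paritySub hm v; have := paritySub hm u; rw [h1] at *; omega
        · exact h1
        · have := paritySub hm v; have := parityAdd hm u; rw [h1] at *; omega
      have e2 : v + 1 = u := by
        rcases h2 with h2 | h2 | h2
        · have := parityAdd hm v; have := paritySub hm u; rw [h2] at *; omega
        · exact h2
        · have := parityAdd hm v; have := parityAdd hm u; rw [h2] at *; omega
      exact absurd (by open Fin.CommRing in linear_combination e2 - e1) (twoNeZero (m := m))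
    · -- u odd, v even
      have h1 := huv (u-1) (by left; rfl) (by have := paritySub hm u; omega)
      have h2 := huv (u+1) (by right; right; rfl) (by have := parityAdd hm u; omega)
      have e1 : u - 1 = v := by
        rcases h1 with h1 | h1 | h1
        · have := paritySub hm u; have := paritySub hm v; rw [h1] at *; omega
        · exact h1
        · have := paritySub hm u; have := parityAdd hm v; rw [h1] at *; omega
      have e2 : u + 1 = v := by
        rcases h2 with h2 | h2 | h2
        · have := parityAdd hm u; have := paritySub hm v; rw [h2] at *; omega
        · exact h2
        · have := parityAdd hm u; have := parityAdd hm v; rw [h2] at *; omega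
      exact absurd (by open Fin.CommRing in linear_combination e2 - e1) (twoNeZero (m := m))
    · -- both odd
      have h1 := huv (u-1) (by left; rfl) (by have := paritySub hm u; omega)
      rcases h1 with h1 | h1 | h1
      · exact sub_left_inj.mp h1
      · have := paritySub hm u; rw [h1] at *; omega
      · -- u - 1 = v + 1
        have h2 := hvu (v-1) (by left; rfl) (by have := paritySub hm v; omega)
        rcases h2 with h2 | h2 | h2
        · exact (sub_left_inj.mp h2).symm
        · have := paritySub hm v; rw [h2] at *; omega
        · rw [Set.mem_singleton_iff] at h1 h2
          exact absurd (by open Fin.CommRing in linear_combination - h1 - h2) (fourNeZero (m := m))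

lemma evens_ncard (hm : m % 2 = 0) : (evens m).ncard = (m+6)/2 := by
  classical
  have : evens m = ↑(Finset.univ.filter (fun v : Fin (m+6) => v.val % 2 = 0)) := by
    ext x; simp [evens]
  rw [this, Set.ncard_coe_finset]
  apply Finset.card_eq_of_bijective (fun i hi => (⟨2*i, by omega⟩ : Fin (m+6)))
  · intro a ha
    simp only [Finset.mem_filter] at ha
    refine ⟨a.val / 2, by have := a.isLt; omega, Fin.ext ?_⟩
    show 2 * (a.val / 2) = a.val
    omega
  · intro i hi
    simp
  · intro i j hi hj hij
    have := congrArg Fin.val hij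
    simp at this
    omega

lemma oneNeZero : (1 : Fin (m+6)) ≠ 0 := by
  intro h
  have := congrArg Fin.val h
  rw [Fin.val_one', Nat.mod_eq_of_lt (by omega)] at this
  simp at this

lemma mem_cnbr_iff (c v : Fin (m+6)) :
    c ∈ cnbr (cycleGraph (m+6)) v ↔ (v = c + 1 ∨ v = c ∨ v = c - 1) := by
  rw [cnbr_eq]
  simp only [Set.mem_insert_iff, Set.mem_singleton_iff]
  have e1 : c = v - 1 ↔ v = c + 1 := by
    constructor <;> intro h
    · exact (sub_eq_iff_eq_add.mp h.symm)
    · simp [h]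
  have e2 : c = v + 1 ↔ v = c - 1 := by
    constructor <;> intro h
    · simp [h]
    · simp [h]
  rw [e1, e2, eq_comm (a := c) (b := v)]

lemma lower_bound (C : Set (Fin (m+6))) (hC : IsIdCode (cycleGraph (m+6)) C) :
    (m+6)/2 ≤ C.ncard := by
  classical
  have hfin : C.Finite := Set.toFinite C
  set Cf := hfin.toFinset with hCf
  have hcard : C.ncard = Cf.card := Set.ncard_eq_toFinset_card C hfin
  set G := cycleGraph (m+6) with hG
  set traceF : Fin (m+6) → Finset (Fin (m+6)) :=
    fun v => Cf.filter (fun c => c ∈ cnbr G v) with htraceF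
  have mem_traceF : ∀ c v, c ∈ traceF v ↔ c ∈ cnbr G v ∩ C := by
    intro c v
    simp [htraceF, hCf, hfin.mem_toFinset, and_comm]
  have trace_nonempty : ∀ v, (traceF v).Nonempty := by
    intro v
    obtain ⟨x, hx⟩ := hC.1 v
    exact ⟨x, (mem_traceF x v).mpr hx⟩
  have trace_inj : ∀ u v, traceF u = traceF v → u = v := by
    intro u v h
    apply hC.2
    ext x
    rw [← mem_traceF, ← mem_traceF, h]
  -- double counting
  have hfilt : ∀ c : Fin (m+6),
      (Finset.univ.filter (fun v => c ∈ cnbr G v)).card = 3 := by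
    intro c
    have : Finset.univ.filter (fun v => c ∈ cnbr G v) = {c+1, c, c-1} := by
      ext v
      simp only [Finset.mem_filter, Finset.mem_univ, true_and, Finset.mem_insert,
        Finset.mem_singleton, hG, mem_cnbr_iff]
    rw [this]
    rw [Finset.card_insert_of_notMem, Finset.card_insert_of_notMem, Finset.card_singleton]
    · intro hmem
      rw [Finset.mem_singleton] at hmem
      exact oneNeZero (m := m) (by open Fin.CommRing in linear_combination hmem)
    · intro hmem
      rcases Finset.mem_insert.mp hmem with h1 | h1
      · exact oneNeZero (m := m) (by open Fin.CommRing in linear_combination h1)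
      · rw [Finset.mem_singleton] at h1
        exact twoNeZero (m := m) (by open Fin.CommRing in linear_combination h1)
  have hsum : ∑ v : Fin (m+6), (traceF v).card = 3 * Cf.card := by
    calc ∑ v : Fin (m+6), (traceF v).card
        = ∑ v : Fin (m+6), ∑ c ∈ Cf, if c ∈ cnbr G v then 1 else 0 :=
          Finset.sum_congr rfl fun v _ => Finset.card_filter _ _
      _ = ∑ c ∈ Cf, ∑ v : Fin (m+6), if c ∈ cnbr G v then 1 else 0 := Finset.sum_comm
      _ = ∑ c ∈ Cf, (Finset.univ.filter (fun v => c ∈ cnbr G v)).card :=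
          Finset.sum_congr rfl fun c _ => (Finset.card_filter _ _).symm
      _ = ∑ _c ∈ Cf, 3 := Finset.sum_congr rfl (fun c _ => hfilt c)
      _ = 3 * Cf.card := by simp [mul_comm]
  -- singletons bound
  set S := Finset.univ.filter (fun v => (traceF v).card = 1) with hS
  have hScard : S.card ≤ Cf.card := by
    apply Finset.card_le_card_of_injOn
      (fun v => (traceF v).min' (trace_nonempty v))
    · intro v hv
      exact Finset.mem_of_mem_filter _ (Finset.min'_mem _ (trace_nonempty v))
    · intro u hu v hv heq
      simp only [Finset.coe_filter, Set.mem_setOf_eq, Finset.mem_univ, true_and, hS] at hu hv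
      simp only at heq
      obtain ⟨a, ha⟩ := Finset.card_eq_one.mp hu
      obtain ⟨b, hb⟩ := Finset.card_eq_one.mp hv
      apply trace_inj
      rw [ha, hb]
      simp only [ha, hb, Finset.min'_singleton] at heq
      rw [heq]
  -- sum lower bound
  have hlow : ∑ v : Fin (m+6), (if (traceF v).card = 1 then 1 else 2)
      ≤ ∑ v : Fin (m+6), (traceF v).card := by
    apply Finset.sum_le_sum
    intro v _
    have h1 : 1 ≤ (traceF v).card := Finset.card_pos.mpr (trace_nonempty v)
    split_ifs with h <;> omega
  have hsplit : ∑ v : Fin (m+6), (if (traceF v).card = 1 then 1 else 2)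
      = S.card * 1 + (Finset.univ.filter (fun v => ¬ (traceF v).card = 1)).card * 2 := by
    rw [Finset.sum_ite, Finset.sum_const, Finset.sum_const, smul_eq_mul, smul_eq_mul]
  have hcompl : S.card + (Finset.univ.filter (fun v => ¬ (traceF v).card = 1)).card = m+6 := by
    rw [hS, Finset.card_filter_add_card_filter_not, Finset.card_univ, Fintype.card_fin]
  rw [hcard]
  omega


end IdAux

theorem stmt_8 (n : ℕ) (heven : Even n) (hn : 6 ≤ n) :
    gammaID (SimpleGraph.cycleGraph n) = n / 2 := by
  obtain ⟨m, rfl⟩ : ∃ m, n = m + 6 := ⟨n - 6, by omega⟩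
  have hm : m % 2 = 0 := by
    rcases heven with ⟨k, hk⟩
    omega
  have hmem : (m+6)/2 ∈ {k | ∃ C : Set (Fin (m+6)),
      IsIdCode (cycleGraph (m+6)) C ∧ C.ncard = k} :=
    ⟨IdAux.evens m, IdAux.evens_isIdCode hm, IdAux.evens_ncard hm⟩
  apply le_antisymm
  · exact Nat.sInf_le hmem
  · apply le_csInf ⟨_, hmem⟩
    rintro k ⟨C, hC, rfl⟩
    exact IdAux.lower_bound C hC
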